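/- For β ≠ 0, the function m_β(x,y) = (β sinh(β/2)) / (2 (e^{β/4} cosh(β(x-y)/2) - e^{-β/4} cosh(β(x+y-1)/2))²) on [0,1]² has uniform marginals: for every x ∈ [0,1], ∫_0^1 m_β(x,y) dy = 1. -/

import Mathlib

open Real

private lemma aux_sinh_pos (a t : ℝ) (ha : a ≠ 0) (ht : 0 < t) :
    0 < a * Real.sinh (a * t) := by
  rcases ha.lt_or_gt with h | h
  · have h1 : a * t < 0 := mul_neg_of_neg_of_pos h ht
    have h2 : 0 < Real.sinh (-(a * t)) := Real.sinh_pos_iff.2 (by linarith)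
    rw [Real.sinh_neg] at h2
    exact mul_pos_of_neg_of_neg h (by linarith)
  · exact mul_pos h (Real.sinh_pos_iff.2 (mul_pos h ht))

private lemma aux_sinh_nonneg (a t : ℝ) (ha : a ≠ 0) (ht : 0 ≤ t) :
    0 ≤ a * Real.sinh (a * t) := by
  rcases ht.eq_or_lt with h | h
  · simp [← h]
  · exact (aux_sinh_pos a t ha h).le

set_option maxHeartbeats 1000000

/-- for `β ≠ 0`, the Mallows permuton density
`m_β(x,y) = β sinh(β/2) / (2 (e^{β/4} cosh(β(x-y)/2) - e^{-β/4} cosh(β(x+y-1)/2))²)`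
has uniform marginals: for every `x ∈ [0,1]`, `∫₀¹ m_β(x,y) dy = 1`. -/
theorem mallows_density_uniform_marginals (β : ℝ) (hβ : β ≠ 0)
    (x : ℝ) (hx : x ∈ Set.Icc (0 : ℝ) 1) :
    (∫ y in (0 : ℝ)..1,
        β * Real.sinh (β / 2) /
          (2 * (Real.exp (β / 4) * Real.cosh (β * (x - y) / 2) -
            Real.exp (-β / 4) * Real.cosh (β * (x + y - 1) / 2)) ^ 2)) = 1 := by
  obtain ⟨hx0, hx1⟩ := hx
  set a : ℝ := β / 2 with ha
  have ha0 : a ≠ 0 := div_ne_zero hβ two_ne_zero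
  set A : ℝ := Real.exp (-(a/2)) * Real.sinh (a * (1 - x)) with hA
  set B : ℝ := Real.exp (a/2) * Real.sinh (a * x) with hB
  set E : ℝ → ℝ := fun y =>
    Real.exp (β / 4) * Real.cosh (β * (x - y) / 2) -
      Real.exp (-β / 4) * Real.cosh (β * (x + y - 1) / 2) with hE
  -- key exponential identity
  have hid : ∀ y : ℝ, E y = A * Real.exp (a * y) + B * Real.exp (-(a * y)) := by
    intro y
    have e0 : Real.exp (β / 4) = Real.exp (a / 2) := by rw [ha]; ring_nf
    have e0' : Real.exp (-β / 4) = (Real.exp (a / 2))⁻¹ := by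
      rw [show -β/4 = -(a/2) by rw [ha]; ring, Real.exp_neg]
    have e1 : Real.exp (β * (x - y) / 2) = Real.exp (a*x) * (Real.exp (a*y))⁻¹ := by
      rw [show β * (x - y) / 2 = a*x + -(a*y) by rw [ha]; ring, Real.exp_add, Real.exp_neg]
    have e2 : Real.exp (-(β * (x - y) / 2)) = (Real.exp (a*x))⁻¹ * Real.exp (a*y) := by
      rw [show -(β * (x - y) / 2) = -(a*x) + a*y by rw [ha]; ring, Real.exp_add, Real.exp_neg]
    have e3 : Real.exp (β * (x + y - 1) / 2)
        = Real.exp (a*x) * Real.exp (a*y) * (Real.exp (a/2) * Real.exp (a/2))⁻¹ := by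
      rw [show β * (x + y - 1) / 2 = a*x + a*y + -(a/2 + a/2) by rw [ha]; ring]
      simp only [Real.exp_add, Real.exp_neg]
    have e4 : Real.exp (-(β * (x + y - 1) / 2))
        = (Real.exp (a*x))⁻¹ * (Real.exp (a*y))⁻¹ * (Real.exp (a/2) * Real.exp (a/2)) := by
      rw [show -(β * (x + y - 1) / 2) = -(a*x) + -(a*y) + (a/2 + a/2) by rw [ha]; ring]
      simp only [Real.exp_add, Real.exp_neg]
    have e5 : Real.exp (a * (1 - x)) = Real.exp (a/2) * Real.exp (a/2) * (Real.exp (a*x))⁻¹ := by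
      rw [show a * (1 - x) = a/2 + a/2 + -(a*x) by ring]; simp only [Real.exp_add, Real.exp_neg]
    have e6 : Real.exp (-(a * (1 - x))) = (Real.exp (a/2) * Real.exp (a/2))⁻¹ * Real.exp (a*x) := by
      rw [show -(a * (1 - x)) = -(a/2 + a/2) + a*x by ring]; simp only [Real.exp_add, Real.exp_neg]
    have e7 : Real.exp (-(a/2)) = (Real.exp (a/2))⁻¹ := Real.exp_neg _
    have e8 : Real.exp (-(a*x)) = (Real.exp (a*x))⁻¹ := Real.exp_neg _
    have e9 : Real.exp (-(a*y)) = (Real.exp (a*y))⁻¹ := Real.exp_neg _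
    simp only [hE]
    rw [hA, hB, Real.cosh_eq, Real.cosh_eq, Real.sinh_eq, Real.sinh_eq,
      e0, e0', e1, e2, e3, e4, e5, e6, e7, e8, e9]
    have p1 := Real.exp_pos (a*x)
    have p2 := Real.exp_pos (a*y)
    have p3 := Real.exp_pos (a/2)
    field_simp
    ring
  -- positivity of a * E y on [0,1]
  have hEne : ∀ y : ℝ, 0 < a * E y ∨ 0 < -(a * E y) → True := fun _ _ => trivial
  have hEpos : ∀ y : ℝ, 0 < a * E y := by
    intro y
    have h1 : 0 ≤ a * Real.sinh (a * x) := aux_sinh_nonneg a x ha0 hx0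
    have h2 : 0 ≤ a * Real.sinh (a * (1 - x)) := aux_sinh_nonneg a (1-x) ha0 (by linarith)
    have p1 := Real.exp_pos (a*y)
    have p2 := Real.exp_pos (-(a*y))
    have p3 := Real.exp_pos (a/2)
    have p4 := Real.exp_pos (-(a/2))
    rw [hid y, hA, hB]
    have key : a * (Real.exp (-(a/2)) * Real.sinh (a * (1 - x)) * Real.exp (a*y)
        + Real.exp (a/2) * Real.sinh (a * x) * Real.exp (-(a*y)))
        = Real.exp (-(a/2)) * Real.exp (a*y) * (a * Real.sinh (a * (1 - x)))
          + Real.exp (a/2) * Real.exp (-(a*y)) * (a * Real.sinh (a * x)) := by ring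
    rw [key]
    rcases hx0.eq_or_lt with h | h
    · have h3 : 0 < a * Real.sinh (a * (1 - x)) := aux_sinh_pos a (1-x) ha0 (by linarith)
      have t1 : 0 < Real.exp (-(a/2)) * Real.exp (a*y) * (a * Real.sinh (a * (1 - x))) :=
        mul_pos (mul_pos p4 p1) h3
      have t2 : 0 ≤ Real.exp (a/2) * Real.exp (-(a*y)) * (a * Real.sinh (a * x)) :=
        mul_nonneg (mul_pos p3 p2).le h1
      linarith
    · have h3 : 0 < a * Real.sinh (a * x) := aux_sinh_pos a x ha0 h
      have t1 : 0 ≤ Real.exp (-(a/2)) * Real.exp (a*y) * (a * Real.sinh (a * (1 - x))) :=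
        mul_nonneg (mul_pos p4 p1).le h2
      have t2 : 0 < Real.exp (a/2) * Real.exp (-(a*y)) * (a * Real.sinh (a * x)) :=
        mul_pos (mul_pos p3 p2) h3
      linarith
  have hE0 : ∀ y : ℝ, E y ≠ 0 := by
    intro y h
    have := hEpos y
    rw [h, mul_zero] at this
    exact lt_irrefl 0 this
  have hsa : Real.sinh a ≠ 0 := fun h => ha0 (Real.sinh_eq_zero.mp h)
  -- continuity / integrability of the integrand
  set f : ℝ → ℝ := fun y =>
    β * Real.sinh (β / 2) /
      (2 * (Real.exp (β / 4) * Real.cosh (β * (x - y) / 2) -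
        Real.exp (-β / 4) * Real.cosh (β * (x + y - 1) / 2)) ^ 2) with hf
  have hcontE : Continuous E := by
    rw [hE]; fun_prop
  have hint : IntervalIntegrable f MeasureTheory.volume 0 1 := by
    apply ContinuousOn.intervalIntegrable
    apply ContinuousOn.div continuousOn_const
    · exact (continuous_const.mul (hcontE.pow 2)).continuousOn
    · intro y _
      have := hE0 y
      simp only [hE] at this
      positivity
  clear_value A B
  rcases eq_or_ne x 0 with hx' | hx'
  · -- case x = 0 : B = 0, E y = A * exp (a*y)
    have hB0 : B = 0 := by rw [hB, hx']; simp
    have hA1 : A = Real.exp (-(a/2)) * Real.sinh a := by rw [hA, hx']; ring_nf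
    have hAne : A ≠ 0 := by
      rw [hA1]
      exact mul_ne_zero (Real.exp_ne_zero _) hsa
    set F : ℝ → ℝ := fun y => -(Real.sinh a / (2 * A * A)) * Real.exp ((-(2*a)) * y) with hF
    have hderiv : ∀ y ∈ Set.uIcc (0:ℝ) 1, HasDerivAt F (f y) y := by
      intro y _
      have h1 : HasDerivAt (fun y : ℝ => Real.exp ((-(2*a)) * y))
          (Real.exp ((-(2*a)) * y) * (-(2*a))) y := by
        simpa using ((hasDerivAt_id y).const_mul (-(2*a))).exp
      have h2 := h1.const_mul (-(Real.sinh a / (2 * A * A)))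
      refine h2.congr_deriv (Eq.symm ?_)
      have hEy : E y = A * Real.exp (a*y) := by rw [hid y, hB0]; ring
      have hfy : f y = 2 * a * Real.sinh a / (2 * (E y)^2) := by
        rw [hf, hE]
        have : β = 2 * a := by rw [ha]; ring
        rw [this, show 2*a/2 = a by ring]
      rw [hfy, hEy]
      have e1 : Real.exp ((-(2*a)) * y) = ((Real.exp (a*y))⁻¹)^2 := by
        rw [show (-(2*a)) * y = -(a*y + a*y) by ring, Real.exp_neg, Real.exp_add]
        ring
      rw [e1]
      have p1 := Real.exp_pos (a*y)
      field_simp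
    have := intervalIntegral.integral_eq_sub_of_hasDerivAt hderiv hint
    rw [hf] at this
    rw [this]
    simp only [hF]
    have e2 : Real.exp ((-(2*a)) * 0) = 1 := by norm_num
    have h2A : 2 * A * A ≠ 0 := by
      intro h
      rcases mul_eq_zero.mp h with h' | h'
      · rcases mul_eq_zero.mp h' with h'' | h''
        · norm_num at h''
        · exact hAne h''
      · exact hAne h'
    have key : Real.sinh a * (1 - Real.exp ((-(2*a)) * 1)) = 2 * A * A := by
      have e1 : Real.exp ((-(2*a)) * 1) = ((Real.exp (a/2))⁻¹)^4 := by
        rw [show (-(2*a)) * 1 = -(a/2 + a/2 + (a/2 + a/2)) by ring, Real.exp_neg]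
        simp only [Real.exp_add]
        ring
      have e8 : Real.exp (-a) = (Real.exp (a/2))⁻¹ * (Real.exp (a/2))⁻¹ := by
        rw [show -a = -(a/2 + a/2) by ring]; simp only [Real.exp_add, Real.exp_neg]; ring
      have e9 : Real.exp a = Real.exp (a/2) * Real.exp (a/2) := by
        rw [← Real.exp_add]; congr 1; ring
      have e7 : Real.exp (-(a/2)) = (Real.exp (a/2))⁻¹ := Real.exp_neg _
      rw [hA1, e1, Real.sinh_eq, e8, e9, e7]
      have p3 : Real.exp (a/2) ≠ 0 := (Real.exp_pos _).ne'
      field_simp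
    rw [e2]
    have step : -(Real.sinh a / (2*A*A)) * Real.exp ((-(2*a)) * 1) - -(Real.sinh a / (2*A*A)) * 1
        = (Real.sinh a * (1 - Real.exp ((-(2*a)) * 1))) / (2*A*A) := by ring
    rw [step, key, div_self h2A]
  · -- case x ≠ 0 : B ≠ 0
    have hBne : B ≠ 0 := by
      have := aux_sinh_pos a x ha0 (hx0.lt_of_ne (Ne.symm hx'))
      rw [hB]
      exact mul_ne_zero (Real.exp_ne_zero _) (fun h => by rw [h, mul_zero] at this; exact lt_irrefl 0 this)
    -- g y = A + B * exp(-(2a) y) is exp(-(a y)) * E y, hence nonzero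
    have hg : ∀ y : ℝ, A + B * Real.exp ((-(2*a)) * y) = Real.exp (-(a*y)) * E y := by
      intro y
      rw [hid y, Real.exp_neg]
      have e1 : Real.exp ((-(2*a)) * y) = ((Real.exp (a*y))⁻¹)^2 := by
        rw [show (-(2*a)) * y = -(a*y + a*y) by ring, Real.exp_neg, Real.exp_add]
        ring
      rw [e1]
      have p1 := Real.exp_pos (a*y)
      field_simp
    have hgne : ∀ y : ℝ, A + B * Real.exp ((-(2*a)) * y) ≠ 0 := by
      intro y
      rw [hg y]
      exact mul_ne_zero (Real.exp_ne_zero _) (hE0 y)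
    have hderiv : ∀ y ∈ Set.uIcc (0:ℝ) 1, HasDerivAt
        (fun y => Real.sinh a / (2 * B) * (A + B * Real.exp ((-(2*a)) * y))⁻¹) (f y) y := by
      intro y _
      have h1 : HasDerivAt (fun y : ℝ => Real.exp ((-(2*a)) * y))
          (Real.exp ((-(2*a)) * y) * (-(2*a))) y := by
        simpa using ((hasDerivAt_id y).const_mul (-(2*a))).exp
      have h2 := (((h1.const_mul B).const_add A).inv (hgne y)).const_mul (Real.sinh a / (2 * B))
      refine h2.congr_deriv (Eq.symm ?_)
      have hfy : f y = 2 * a * Real.sinh a / (2 * (E y)^2) := by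
        rw [hf, hE]
        have : β = 2 * a := by rw [ha]; ring
        rw [this, show 2*a/2 = a by ring]
      rw [hfy]
      have hEy : E y = Real.exp (a*y) * (A + B * Real.exp ((-(2*a)) * y)) := by
        rw [hg y, Real.exp_neg]
        have p1 := Real.exp_pos (a*y)
        field_simp
      rw [hEy]
      have hgy := hgne y
      have e1 : Real.exp ((-(2*a)) * y) = ((Real.exp (a*y))⁻¹)^2 := by
        rw [show (-(2*a)) * y = -(a*y + a*y) by ring, Real.exp_neg, Real.exp_add]
        ring
      have p1 : Real.exp (a*y) ≠ 0 := (Real.exp_pos (a*y)).ne'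
      rw [e1] at hgy ⊢
      have hgg : A + B*((Real.exp (a*y))⁻¹)^2
          = ((Real.exp (a*y))^2)⁻¹ * (B + A * (Real.exp (a*y))^2) := by
        field_simp
        ring
      rw [hgg] at hgy ⊢
      have hW : B + A * (Real.exp (a*y))^2 ≠ 0 := by
        intro h
        rw [h, mul_zero] at hgy
        exact hgy rfl
      field_simp [hW, p1]
    have hsub := intervalIntegral.integral_eq_sub_of_hasDerivAt hderiv hint
    rw [hf] at hsub
    rw [hsub]
    -- endpoint values
    have hg1 : A + B * Real.exp ((-(2*a)) * 1)
        = Real.exp (-(a*x) + -(a/2)) * Real.sinh a := by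
      rw [hg 1, hid 1]
      rw [hA, hB, Real.sinh_eq, Real.sinh_eq, Real.sinh_eq]
      have e5 : Real.exp (a * (1 - x)) = Real.exp (a/2) * Real.exp (a/2) * (Real.exp (a*x))⁻¹ := by
        rw [show a * (1 - x) = a/2 + a/2 + -(a*x) by ring]; simp only [Real.exp_add, Real.exp_neg]
      have e6 : Real.exp (-(a * (1 - x))) = (Real.exp (a/2) * Real.exp (a/2))⁻¹ * Real.exp (a*x) := by
        rw [show -(a * (1 - x)) = -(a/2 + a/2) + a*x by ring]; simp only [Real.exp_add, Real.exp_neg]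
      have e7 : Real.exp (-(a/2)) = (Real.exp (a/2))⁻¹ := Real.exp_neg _
      have e8 : Real.exp (-(a*x)) = (Real.exp (a*x))⁻¹ := Real.exp_neg _
      have e9 : Real.exp (a * 1) = Real.exp (a/2) * Real.exp (a/2) := by
        rw [show a * 1 = a/2 + a/2 by ring, Real.exp_add]
      have e10 : Real.exp (-(a * 1)) = (Real.exp (a/2) * Real.exp (a/2))⁻¹ := by
        rw [show -(a * 1) = -(a/2 + a/2) by ring]; simp only [Real.exp_add, Real.exp_neg]
      have e11 : Real.exp (-(a*x) + -(a/2)) = (Real.exp (a*x))⁻¹ * (Real.exp (a/2))⁻¹ := by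
        simp only [Real.exp_add, Real.exp_neg]
      have e12 : Real.exp (-a) = (Real.exp (a/2) * Real.exp (a/2))⁻¹ := by
        rw [show -a = -(a/2 + a/2) by ring]; simp only [Real.exp_add, Real.exp_neg]
      have e13 : Real.exp a = Real.exp (a/2) * Real.exp (a/2) := by
        rw [← Real.exp_add]; congr 1; ring
      rw [e5, e6, e7, e8, e9, e10, e11, e12, e13]
      have p1 := Real.exp_pos (a*x)
      have p3 := Real.exp_pos (a/2)
      field_simp
      ring
    have hg0 : A + B * Real.exp ((-(2*a)) * 0)
        = Real.exp (a*x + -(a/2)) * Real.sinh a := by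
      rw [hg 0, hid 0]
      rw [hA, hB, Real.sinh_eq, Real.sinh_eq, Real.sinh_eq]
      have e5 : Real.exp (a * (1 - x)) = Real.exp (a/2) * Real.exp (a/2) * (Real.exp (a*x))⁻¹ := by
        rw [show a * (1 - x) = a/2 + a/2 + -(a*x) by ring]; simp only [Real.exp_add, Real.exp_neg]
      have e6 : Real.exp (-(a * (1 - x))) = (Real.exp (a/2) * Real.exp (a/2))⁻¹ * Real.exp (a*x) := by
        rw [show -(a * (1 - x)) = -(a/2 + a/2) + a*x by ring]; simp only [Real.exp_add, Real.exp_neg]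
      have e7 : Real.exp (-(a/2)) = (Real.exp (a/2))⁻¹ := Real.exp_neg _
      have e8 : Real.exp (-(a*x)) = (Real.exp (a*x))⁻¹ := Real.exp_neg _
      have e11 : Real.exp (a*x + -(a/2)) = Real.exp (a*x) * (Real.exp (a/2))⁻¹ := by
        simp only [Real.exp_add, Real.exp_neg]
      have e12 : Real.exp (-a) = (Real.exp (a/2) * Real.exp (a/2))⁻¹ := by
        rw [show -a = -(a/2 + a/2) by ring]; simp only [Real.exp_add, Real.exp_neg]
      have e13 : Real.exp a = Real.exp (a/2) * Real.exp (a/2) := by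
        rw [← Real.exp_add]; congr 1; ring
      rw [e5, e6, e7, e8, e11, e12, e13]
      have p1 := Real.exp_pos (a*x)
      have p3 := Real.exp_pos (a/2)
      field_simp
      simp only [mul_zero, neg_zero, Real.exp_zero]; ring
    rw [hg1, hg0]
    have hBalt : Real.exp (a*x) * Real.exp (a/2) - (Real.exp (a*x))⁻¹ * Real.exp (a/2) = 2 * B := by
      rw [hB, Real.sinh_eq, Real.exp_neg]
      ring
    have e11 : Real.exp (-(a*x) + -(a/2)) = (Real.exp (a*x))⁻¹ * (Real.exp (a/2))⁻¹ := by
      simp only [Real.exp_add, Real.exp_neg]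
    have e12 : Real.exp (a*x + -(a/2)) = Real.exp (a*x) * (Real.exp (a/2))⁻¹ := by
      simp only [Real.exp_add, Real.exp_neg]
    rw [e11, e12]
    have p1 : Real.exp (a*x) ≠ 0 := (Real.exp_pos _).ne'
    have p3 : Real.exp (a/2) ≠ 0 := (Real.exp_pos _).ne'
    have comb : Real.sinh a / (2*B) * ((Real.exp (a*x))⁻¹ * (Real.exp (a/2))⁻¹ * Real.sinh a)⁻¹
        - Real.sinh a / (2*B) * (Real.exp (a*x) * (Real.exp (a/2))⁻¹ * Real.sinh a)⁻¹
        = (Real.exp (a*x) * Real.exp (a/2) - (Real.exp (a*x))⁻¹ * Real.exp (a/2)) / (2*B) := by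
      field_simp
    have h2B : (2:ℝ) * B ≠ 0 := by
      intro h
      rcases mul_eq_zero.mp h with h' | h'
      · norm_num at h'
      · exact hBne h'
    rw [comb, hBalt, div_self h2B]
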